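/- Let U ⊆ ℂ ≅ ℝ² be a connected open neighborhood of 0 and let φ₁, φ₂ : U → ℝ be real analytic functions such that, with K_i := −2 e^{−2φ_i} ∂_z∂_{z̄}φ_i, both satisfy ∂_x²K_i − ∂_y²K_i − 2(∂_xφ_i)(∂_xK_i) + 2(∂_yφ_i)(∂_yK_i) = 0 on U. If there is an open interval I ∋ 0 with I × {0} ⊆ U such that ∂_y^j φ₁ (x, 0) = ∂_y^j φ₂ (x, 0) for all x ∈ I and all j = 0, 1, 2, 3, then φ₁ = φ₂ on some open neighborhood of 0. -/

import Mathlib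

open Complex
open scoped ContDiff

/-- Partial derivative in the `x`-direction (real coordinate). -/
noncomputable def pdx (f : ℂ → ℂ) (z : ℂ) : ℂ := fderiv ℝ f z 1

/-- Partial derivative in the `y`-direction (real coordinate). -/
noncomputable def pdy (f : ℂ → ℂ) (z : ℂ) : ℂ := fderiv ℝ f z Complex.I

/-- Wirtinger derivative `∂_z = (1/2)(∂_x - i ∂_y)`. -/
noncomputable def pdz (f : ℂ → ℂ) (z : ℂ) : ℂ := (1/2) * (pdx f z - Complex.I * pdy f z)

/-- Wirtinger derivative `∂_z̄ = (1/2)(∂_x + i ∂_y)`. -/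
noncomputable def pdzbar (f : ℂ → ℂ) (z : ℂ) : ℂ := (1/2) * (pdx f z + Complex.I * pdy f z)

/-- The complexification of a real-valued function. -/
noncomputable def phiC (φ : ℂ → ℝ) : ℂ → ℂ := fun z => (φ z : ℂ)

/-- The Gauss curvature `K = -2 e^{-2φ} ∂_z ∂_z̄ φ` of the metric `g = 2 e^{2φ} |dz|²`. -/
noncomputable def gaussK (φ : ℂ → ℝ) : ℂ → ℂ := fun z =>
  (-2 : ℂ) * (Real.exp (-2 * φ z) : ℂ) * pdz (pdzbar (phiC φ)) z

/-- The Laplace–Beltrami operator `Δ_g f = 2 e^{-2φ} ∂_z ∂_z̄ f` of `g = 2 e^{2φ} |dz|²`. -/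
noncomputable def lapg (φ : ℂ → ℝ) (f : ℂ → ℂ) : ℂ → ℂ := fun z =>
  (2 : ℂ) * (Real.exp (-2 * φ z) : ℂ) * pdz (pdzbar f) z

/-- Second covariant derivative `K_{;z̄z̄} = ∂_z̄² K - 2 (∂_z̄ φ)(∂_z̄ K)`. -/
noncomputable def Kzb2 (φ : ℂ → ℝ) : ℂ → ℂ := fun z =>
  pdzbar (pdzbar (gaussK φ)) z - 2 * pdzbar (phiC φ) z * pdzbar (gaussK φ) z

/-- Third covariant derivative `K_{;z̄z̄z} = ∂_z K_{;z̄z̄}`. -/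
noncomputable def Kzb2z (φ : ℂ → ℝ) : ℂ → ℂ := fun z => pdz (Kzb2 φ) z

/-- Fourth covariant derivative `K_{;z̄z̄zz} = ∂_z K_{;z̄z̄z} - 2 (∂_z φ) K_{;z̄z̄z}`. -/
noncomputable def Kzb2z2 (φ : ℂ → ℝ) : ℂ → ℂ := fun z =>
  pdz (Kzb2z φ) z - 2 * pdz (phiC φ) z * Kzb2z φ z

/-- The Euclidean Laplacian `Δ = ∂_x² + ∂_y²` on real-valued functions on `ℂ ≅ ℝ²`. -/
noncomputable def lapR (f : ℂ → ℝ) : ℂ → ℝ := fun z =>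
  fderiv ℝ (fun w => fderiv ℝ f w 1) z 1 + fderiv ℝ (fun w => fderiv ℝ f w Complex.I) z Complex.I

/-- The real part (times 4) of the sphericity equation `K_{;z̄z̄} = 0`:
`∂_x²K - ∂_y²K - 2(∂_xφ)(∂_xK) + 2(∂_yφ)(∂_yK)`. -/
noncomputable def sphRe (φ : ℂ → ℝ) : ℂ → ℂ := fun z =>
  pdx (pdx (gaussK φ)) z - pdy (pdy (gaussK φ)) z
    - 2 * pdx (phiC φ) z * pdx (gaussK φ) z + 2 * pdy (phiC φ) z * pdy (gaussK φ) z

/-- Partial derivative in the `y`-direction for real-valued functions on `ℂ ≅ ℝ²`. -/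
noncomputable def pdyR (f : ℂ → ℝ) : ℂ → ℝ := fun z => fderiv ℝ f z Complex.I
set_option linter.unusedSectionVars false
set_option linter.unusedVariables false
open Complex

namespace SCU

/-- directional derivative operator -/
noncomputable def dd (v : ℂ) {F : Type} [NormedAddCommGroup F] [NormedSpace ℝ F]
    (f : ℂ → F) : ℂ → F := fun z => fderiv ℝ f z v

variable {F G : Type} [NormedAddCommGroup F] [NormedSpace ℝ F] [CompleteSpace F]
  [NormedAddCommGroup G] [NormedSpace ℝ G] [CompleteSpace G]
variable {U : Set ℂ} {I : Set ℝ}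

lemma dd_analytic (v : ℂ) {f : ℂ → F} (hf : AnalyticOnNhd ℝ f U) :
    AnalyticOnNhd ℝ (dd v f) U :=
  (ContinuousLinearMap.apply ℝ F v).comp_analyticOnNhd hf.fderiv

lemma ddit_analytic (v : ℂ) (c : ℕ) {f : ℂ → F} (hf : AnalyticOnNhd ℝ f U) :
    AnalyticOnNhd ℝ ((dd v)^[c] f) U := by
  induction c generalizing f with
  | zero => exact hf
  | succ c ih => rw [Function.iterate_succ_apply]; exact ih (dd_analytic v hf)

lemma dd_congr (hU : IsOpen U) {f g : ℂ → F} (h : Set.EqOn f g U) (v : ℂ) :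
    Set.EqOn (dd v f) (dd v g) U := fun z hz => by
  unfold dd
  rw [Filter.EventuallyEq.fderiv_eq (Filter.eventuallyEq_of_mem (hU.mem_nhds hz) h)]

lemma ddit_congr (hU : IsOpen U) {f g : ℂ → F} (h : Set.EqOn f g U) (v : ℂ) (c : ℕ) :
    Set.EqOn ((dd v)^[c] f) ((dd v)^[c] g) U := by
  induction c generalizing f g with
  | zero => exact h
  | succ c ih =>
    rw [Function.iterate_succ_apply, Function.iterate_succ_apply]
    exact ih (dd_congr hU h v)

lemma dd_clm (e : F →L[ℝ] G) {f : ℂ → F} {z : ℂ} (hf : DifferentiableAt ℝ f z) (v : ℂ) :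
    dd v (fun w => e (f w)) z = e (dd v f z) := by
  unfold dd
  rw [show (fun w => e (f w)) = (e ∘ f) from rfl, (e.hasFDerivAt.comp z hf.hasFDerivAt).fderiv]
  rfl

lemma ddit_clm (hU : IsOpen U) (e : F →L[ℝ] G) {f : ℂ → F} (hf : AnalyticOnNhd ℝ f U)
    (v : ℂ) (c : ℕ) :
    Set.EqOn ((dd v)^[c] (fun w => e (f w))) (fun w => e (((dd v)^[c] f) w)) U := by
  induction c generalizing f with
  | zero => exact fun z _ => rfl
  | succ c ih =>
    intro z hz
    rw [Function.iterate_succ_apply]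
    have h1 : Set.EqOn (dd v (fun w => e (f w))) (fun w => e (dd v f w)) U :=
      fun w hw => dd_clm e ((hf w hw).differentiableAt) v
    rw [ddit_congr hU h1 v c hz, ih (dd_analytic v hf) hz, Function.iterate_succ_apply]

lemma dd_add {f g : ℂ → F} {z : ℂ} (hf : DifferentiableAt ℝ f z)
    (hg : DifferentiableAt ℝ g z) (v : ℂ) :
    dd v (fun w => f w + g w) z = dd v f z + dd v g z := by
  unfold dd; rw [fderiv_fun_add hf hg]; rfl

lemma dd_sub {f g : ℂ → F} {z : ℂ} (hf : DifferentiableAt ℝ f z)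
    (hg : DifferentiableAt ℝ g z) (v : ℂ) :
    dd v (fun w => f w - g w) z = dd v f z - dd v g z := by
  unfold dd; rw [fderiv_fun_sub hf hg]; rfl

lemma dd_const_mul {f : ℂ → ℂ} {z : ℂ} (hf : DifferentiableAt ℝ f z) (a v : ℂ) :
    dd v (fun w => a * f w) z = a * dd v f z := by
  unfold dd; rw [fderiv_const_mul hf a]; rfl

lemma dd_mul {f g : ℂ → ℂ} {z : ℂ} (hf : DifferentiableAt ℝ f z)
    (hg : DifferentiableAt ℝ g z) (v : ℂ) :
    dd v (fun w => f w * g w) z = f z * dd v g z + g z * dd v f z := by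
  unfold dd; rw [fderiv_fun_mul hf hg]; rfl

lemma dd_exp {f : ℂ → ℂ} {z : ℂ} (hf : DifferentiableAt ℝ f z) (v : ℂ) :
    dd v (fun w => Complex.exp (f w)) z = Complex.exp (f z) * dd v f z := by
  have h1 := ((Complex.hasDerivAt_exp (f z)).hasFDerivAt.restrictScalars ℝ).comp z hf.hasFDerivAt
  unfold dd
  rw [show (fun w => Complex.exp (f w)) = (Complex.exp ∘ f) from rfl, h1.fderiv]
  simp [mul_comm]

lemma dd_comm (hU : IsOpen U) {f : ℂ → F} (hf : AnalyticOnNhd ℝ f U) (v w : ℂ)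
    {z : ℂ} (hz : z ∈ U) :
    dd v (dd w f) z = dd w (dd v f) z := by
  have hsymm : IsSymmSndFDerivAt ℝ f z :=
    ((hf z hz).contDiffAt (n := 2)).isSymmSndFDerivAt (by simp [minSmoothness_of_isRCLikeNormedField])
  have hdf : DifferentiableAt ℝ (fderiv ℝ f) z := ((hf.fderiv) z hz).differentiableAt
  have e1 : ∀ a b : ℂ, dd a (dd b f) z = fderiv ℝ (fderiv ℝ f) z a b := by
    intro a b
    have h2 : dd b f = fun u => (ContinuousLinearMap.apply ℝ F b) (fderiv ℝ f u) := rfl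
    rw [h2, dd_clm _ hdf a]
    rfl
  rw [e1, e1]
  exact hsymm v w


lemma hasDerivAt_line {g : ℂ → F} {x : ℝ} (hg : DifferentiableAt ℝ g x) :
    HasDerivAt (fun t : ℝ => g t) (dd 1 g x) x := by
  have hor : HasDerivAt (fun t : ℝ => (t : ℂ)) 1 x := by
    simpa using (hasDerivAt_id x).ofReal_comp
  exact hg.hasFDerivAt.comp_hasDerivAt x hor

lemma dd1_line_eq (hIopen : IsOpen I) {g₁ g₂ : ℂ → F} {x : ℝ} (hx : x ∈ I)
    (hg₁ : DifferentiableAt ℝ g₁ x) (hg₂ : DifferentiableAt ℝ g₂ x)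
    (h : ∀ t ∈ I, g₁ t = g₂ t) : dd 1 g₁ x = dd 1 g₂ x := by
  have h1 := (hasDerivAt_line hg₁).deriv
  have h2 := (hasDerivAt_line hg₂).deriv
  have h3 : (fun t : ℝ => g₁ t) =ᶠ[nhds x] (fun t : ℝ => g₂ t) :=
    Filter.eventuallyEq_of_mem (hIopen.mem_nhds hx) (fun t ht => h t ht)
  rw [← h1, ← h2, h3.deriv_eq]

/-- Jet equality up to `y`-order `m` along the line `I`. -/
def Jt (I : Set ℝ) (m : ℕ) (f g : ℂ → ℂ) : Prop :=
  ∀ c ≤ m, ∀ x ∈ I, (dd Complex.I)^[c] f x = (dd Complex.I)^[c] g x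

lemma Jt_mono {m m' : ℕ} (h : m' ≤ m) {f g : ℂ → ℂ} (hJ : Jt I m f g) : Jt I m' f g :=
  fun c hc => hJ c (hc.trans h)

lemma Jt_Y {m : ℕ} {f g : ℂ → ℂ} (hJ : Jt I (m + 1) f g) :
    Jt I m (dd Complex.I f) (dd Complex.I g) := by
  intro c hc x hx
  rw [← Function.iterate_succ_apply, ← Function.iterate_succ_apply]
  exact hJ (c + 1) (by omega) x hx

lemma ddit_comm1 (hU : IsOpen U) {f : ℂ → F} (hf : AnalyticOnNhd ℝ f U) (c : ℕ) :
    Set.EqOn ((dd Complex.I)^[c] (dd 1 f)) (dd 1 ((dd Complex.I)^[c] f)) U := by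
  induction c generalizing f with
  | zero => exact fun z _ => rfl
  | succ c ih =>
    intro z hz
    rw [Function.iterate_succ_apply]
    have h1 : Set.EqOn (dd Complex.I (dd 1 f)) (dd 1 (dd Complex.I f)) U :=
      fun w hw => dd_comm hU hf Complex.I 1 hw
    rw [ddit_congr hU h1 Complex.I c hz, ih (dd_analytic _ hf) hz,
      ← Function.iterate_succ_apply]

lemma Jt_X (hU : IsOpen U) (hIopen : IsOpen I) (hIU : ∀ x ∈ I, (x : ℂ) ∈ U) {m : ℕ} {f g : ℂ → ℂ} (hf : AnalyticOnNhd ℝ f U) (hg : AnalyticOnNhd ℝ g U)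
    (hJ : Jt I m f g) : Jt I m (dd 1 f) (dd 1 g) := by
  intro c hc x hx
  rw [ddit_comm1 hU hf c (hIU x hx), ddit_comm1 hU hg c (hIU x hx)]
  exact dd1_line_eq hIopen hx
    ((ddit_analytic Complex.I c hf _ (hIU x hx)).differentiableAt)
    ((ddit_analytic Complex.I c hg _ (hIU x hx)).differentiableAt)
    (fun t ht => hJ c hc t ht)

lemma ddit_add (hU : IsOpen U) {f g : ℂ → F} (hf : AnalyticOnNhd ℝ f U)
    (hg : AnalyticOnNhd ℝ g U) (v : ℂ) (c : ℕ) :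
    Set.EqOn ((dd v)^[c] (fun w => f w + g w))
      (fun w => ((dd v)^[c] f) w + ((dd v)^[c] g) w) U := by
  induction c generalizing f g with
  | zero => exact fun z _ => rfl
  | succ c ih =>
    intro z hz
    rw [Function.iterate_succ_apply]
    have h1 : Set.EqOn (dd v (fun w => f w + g w)) (fun w => dd v f w + dd v g w) U :=
      fun w hw => dd_add ((hf w hw).differentiableAt) ((hg w hw).differentiableAt) v
    rw [ddit_congr hU h1 v c hz, ih (dd_analytic v hf) (dd_analytic v hg) hz,
      Function.iterate_succ_apply, Function.iterate_succ_apply]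

lemma ddit_sub (hU : IsOpen U) {f g : ℂ → F} (hf : AnalyticOnNhd ℝ f U)
    (hg : AnalyticOnNhd ℝ g U) (v : ℂ) (c : ℕ) :
    Set.EqOn ((dd v)^[c] (fun w => f w - g w))
      (fun w => ((dd v)^[c] f) w - ((dd v)^[c] g) w) U := by
  induction c generalizing f g with
  | zero => exact fun z _ => rfl
  | succ c ih =>
    intro z hz
    rw [Function.iterate_succ_apply]
    have h1 : Set.EqOn (dd v (fun w => f w - g w)) (fun w => dd v f w - dd v g w) U :=
      fun w hw => dd_sub ((hf w hw).differentiableAt) ((hg w hw).differentiableAt) v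
    rw [ddit_congr hU h1 v c hz, ih (dd_analytic v hf) (dd_analytic v hg) hz,
      Function.iterate_succ_apply, Function.iterate_succ_apply]

lemma Jt_add (hU : IsOpen U) (hIopen : IsOpen I) (hIU : ∀ x ∈ I, (x : ℂ) ∈ U) {m : ℕ} {f₁ f₂ g₁ g₂ : ℂ → ℂ} (hf₁ : AnalyticOnNhd ℝ f₁ U)
    (hf₂ : AnalyticOnNhd ℝ f₂ U) (hg₁ : AnalyticOnNhd ℝ g₁ U) (hg₂ : AnalyticOnNhd ℝ g₂ U)
    (hJf : Jt I m f₁ f₂) (hJg : Jt I m g₁ g₂) :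
    Jt I m (fun z => f₁ z + g₁ z) (fun z => f₂ z + g₂ z) := by
  intro c hc x hx
  rw [ddit_add hU hf₁ hg₁ Complex.I c (hIU x hx), ddit_add hU hf₂ hg₂ Complex.I c (hIU x hx)]
  simp only [hJf c hc x hx, hJg c hc x hx]

lemma Jt_sub (hU : IsOpen U) (hIopen : IsOpen I) (hIU : ∀ x ∈ I, (x : ℂ) ∈ U) {m : ℕ} {f₁ f₂ g₁ g₂ : ℂ → ℂ} (hf₁ : AnalyticOnNhd ℝ f₁ U)
    (hf₂ : AnalyticOnNhd ℝ f₂ U) (hg₁ : AnalyticOnNhd ℝ g₁ U) (hg₂ : AnalyticOnNhd ℝ g₂ U)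
    (hJf : Jt I m f₁ f₂) (hJg : Jt I m g₁ g₂) :
    Jt I m (fun z => f₁ z - g₁ z) (fun z => f₂ z - g₂ z) := by
  intro c hc x hx
  rw [ddit_sub hU hf₁ hg₁ Complex.I c (hIU x hx), ddit_sub hU hf₂ hg₂ Complex.I c (hIU x hx)]
  simp only [hJf c hc x hx, hJg c hc x hx]

lemma Jt_mul (hU : IsOpen U) (hIopen : IsOpen I) (hIU : ∀ x ∈ I, (x : ℂ) ∈ U) {m : ℕ} {f₁ f₂ g₁ g₂ : ℂ → ℂ} (hf₁ : AnalyticOnNhd ℝ f₁ U)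
    (hf₂ : AnalyticOnNhd ℝ f₂ U) (hg₁ : AnalyticOnNhd ℝ g₁ U) (hg₂ : AnalyticOnNhd ℝ g₂ U)
    (hJf : Jt I m f₁ f₂) (hJg : Jt I m g₁ g₂) :
    Jt I m (fun z => f₁ z * g₁ z) (fun z => f₂ z * g₂ z) := by
  induction m generalizing f₁ f₂ g₁ g₂ with
  | zero =>
    intro c hc x hx
    interval_cases c
    have h1 := hJf 0 le_rfl x hx
    have h2 := hJg 0 le_rfl x hx
    simp only [Function.iterate_zero_apply] at h1 h2 ⊢
    rw [h1, h2]
  | succ m ih =>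
    intro c hc x hx
    match c with
    | 0 =>
      have h1 := hJf 0 (by omega) x hx
      have h2 := hJg 0 (by omega) x hx
      simp only [Function.iterate_zero_apply] at h1 h2 ⊢
      rw [h1, h2]
    | c + 1 =>
      rw [Function.iterate_succ_apply, Function.iterate_succ_apply]
      have key : ∀ (f g : ℂ → ℂ), AnalyticOnNhd ℝ f U → AnalyticOnNhd ℝ g U →
          Set.EqOn (dd Complex.I (fun z => f z * g z))
            (fun z => f z * dd Complex.I g z + g z * dd Complex.I f z) U :=
        fun f g hf hg w hw =>
          dd_mul ((hf w hw).differentiableAt) ((hg w hw).differentiableAt) Complex.I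
      rw [ddit_congr hU (key f₁ g₁ hf₁ hg₁) Complex.I c (hIU x hx),
        ddit_congr hU (key f₂ g₂ hf₂ hg₂) Complex.I c (hIU x hx)]
      have hJ1 : Jt I m (fun z => f₁ z * dd Complex.I g₁ z + g₁ z * dd Complex.I f₁ z)
          (fun z => f₂ z * dd Complex.I g₂ z + g₂ z * dd Complex.I f₂ z) := by
        apply Jt_add hU hIopen hIU
        · exact hf₁.mul (dd_analytic _ hg₁)
        · exact hf₂.mul (dd_analytic _ hg₂)
        · exact hg₁.mul (dd_analytic _ hf₁)
        · exact hg₂.mul (dd_analytic _ hf₂)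
        · exact ih hf₁ hf₂ (dd_analytic _ hg₁) (dd_analytic _ hg₂)
            (Jt_mono (by omega) hJf) (Jt_Y hJg)
        · exact ih hg₁ hg₂ (dd_analytic _ hf₁) (dd_analytic _ hf₂)
            (Jt_mono (by omega) hJg) (Jt_Y hJf)
      exact hJ1 c (by omega) x hx

lemma cexp_analytic {f : ℂ → ℂ} (hf : AnalyticOnNhd ℝ f U) :
    AnalyticOnNhd ℝ (fun z => Complex.exp (f z)) U :=
  fun z hz => (analyticAt_cexp.restrictScalars).comp (hf z hz)

lemma Jt_exp (hU : IsOpen U) (hIopen : IsOpen I) (hIU : ∀ x ∈ I, (x : ℂ) ∈ U) {m : ℕ} {f₁ f₂ : ℂ → ℂ} (hf₁ : AnalyticOnNhd ℝ f₁ U)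
    (hf₂ : AnalyticOnNhd ℝ f₂ U) (hJf : Jt I m f₁ f₂) :
    Jt I m (fun z => Complex.exp (f₁ z)) (fun z => Complex.exp (f₂ z)) := by
  induction m generalizing f₁ f₂ with
  | zero =>
    intro c hc x hx
    interval_cases c
    have h1 := hJf 0 le_rfl x hx
    simp only [Function.iterate_zero_apply] at h1 ⊢
    rw [h1]
  | succ m ih =>
    intro c hc x hx
    match c with
    | 0 =>
      have h1 := hJf 0 (by omega) x hx
      simp only [Function.iterate_zero_apply] at h1 ⊢
      rw [h1]
    | c + 1 =>
      rw [Function.iterate_succ_apply, Function.iterate_succ_apply]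
      have key : ∀ (f : ℂ → ℂ), AnalyticOnNhd ℝ f U →
          Set.EqOn (dd Complex.I (fun z => Complex.exp (f z)))
            (fun z => Complex.exp (f z) * dd Complex.I f z) U :=
        fun f hf w hw => dd_exp ((hf w hw).differentiableAt) Complex.I
      rw [ddit_congr hU (key f₁ hf₁) Complex.I c (hIU x hx),
        ddit_congr hU (key f₂ hf₂) Complex.I c (hIU x hx)]
      have hJ1 : Jt I m (fun z => Complex.exp (f₁ z) * dd Complex.I f₁ z)
          (fun z => Complex.exp (f₂ z) * dd Complex.I f₂ z) :=
        Jt_mul hU hIopen hIU (cexp_analytic hf₁) (cexp_analytic hf₂)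
          (dd_analytic _ hf₁) (dd_analytic _ hf₂)
          (ih hf₁ hf₂ (Jt_mono (by omega) hJf)) (Jt_Y hJf)
      exact hJ1 c (by omega) x hx


lemma ddit_const_mul (hU : IsOpen U) {f : ℂ → ℂ} (hf : AnalyticOnNhd ℝ f U) (a v : ℂ) (c : ℕ) :
    Set.EqOn ((dd v)^[c] (fun w => a * f w)) (fun w => a * ((dd v)^[c] f) w) U := by
  induction c generalizing f with
  | zero => exact fun z _ => rfl
  | succ c ih =>
    intro z hz
    rw [Function.iterate_succ_apply]
    have h1 : Set.EqOn (dd v (fun w => a * f w)) (fun w => a * dd v f w) U :=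
      fun w hw => dd_const_mul ((hf w hw).differentiableAt) a v
    rw [ddit_congr hU h1 v c hz, ih (dd_analytic v hf) hz, Function.iterate_succ_apply]

lemma Jt_const_mul (hU : IsOpen U) (hIU : ∀ x ∈ I, (x : ℂ) ∈ U) {m : ℕ} {f₁ f₂ : ℂ → ℂ}
    (hf₁ : AnalyticOnNhd ℝ f₁ U) (hf₂ : AnalyticOnNhd ℝ f₂ U) (a : ℂ)
    (hJf : Jt I m f₁ f₂) : Jt I m (fun z => a * f₁ z) (fun z => a * f₂ z) := by
  intro c hc x hx
  rw [ddit_const_mul hU hf₁ a Complex.I c (hIU x hx),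
    ddit_const_mul hU hf₂ a Complex.I c (hIU x hx)]
  simp only [hJf c hc x hx]


/-! ### PDE-specific identities -/

noncomputable def Em (φ : ℂ → ℝ) : ℂ → ℂ := fun z => Complex.exp ((-2 : ℂ) * phiC φ z)
noncomputable def E2 (φ : ℂ → ℝ) : ℂ → ℂ := fun z => Complex.exp ((2 : ℂ) * phiC φ z)
noncomputable def Kp (φ : ℂ → ℝ) : ℂ → ℂ := fun z =>
  (-(1:ℂ)/2) * Em φ z * (dd 1 (dd 1 (phiC φ)) z + dd Complex.I (dd Complex.I (phiC φ)) z)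

variable {φ : ℂ → ℝ}

lemma phiC_analytic (hφ : AnalyticOnNhd ℝ φ U) : AnalyticOnNhd ℝ (phiC φ) U :=
  Complex.ofRealCLM.comp_analyticOnNhd hφ

lemma phiC_mul_analytic (hφ : AnalyticOnNhd ℝ φ U) (a : ℂ) :
    AnalyticOnNhd ℝ (fun z => a * phiC φ z) U :=
  analyticOnNhd_const.mul (phiC_analytic hφ)

lemma Em_analytic (hφ : AnalyticOnNhd ℝ φ U) : AnalyticOnNhd ℝ (Em φ) U :=
  cexp_analytic (phiC_mul_analytic hφ _)

lemma E2_analytic (hφ : AnalyticOnNhd ℝ φ U) : AnalyticOnNhd ℝ (E2 φ) U :=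
  cexp_analytic (phiC_mul_analytic hφ _)

lemma Kp_analytic (hφ : AnalyticOnNhd ℝ φ U) : AnalyticOnNhd ℝ (Kp φ) U := by
  have hΦ := phiC_analytic hφ
  exact (analyticOnNhd_const.mul (Em_analytic hφ)).mul
    ((dd_analytic 1 (dd_analytic 1 hΦ)).add (dd_analytic Complex.I (dd_analytic Complex.I hΦ)))

lemma E2_mul_Em (z : ℂ) : E2 φ z * Em φ z = 1 := by
  rw [E2, Em, ← Complex.exp_add]
  ring_nf
  exact Complex.exp_zero

lemma gaussK_eqOn (hU : IsOpen U) (hφ : AnalyticOnNhd ℝ φ U) :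
    Set.EqOn (gaussK φ) (Kp φ) U := by
  intro z hz
  have hΦ := phiC_analytic hφ
  have h1 : DifferentiableAt ℝ (dd 1 (phiC φ)) z := ((dd_analytic 1 hΦ) z hz).differentiableAt
  have hI : DifferentiableAt ℝ (dd Complex.I (phiC φ)) z :=
    ((dd_analytic Complex.I hΦ) z hz).differentiableAt
  have hIc : DifferentiableAt ℝ (fun w => Complex.I * dd Complex.I (phiC φ) w) z :=
    (differentiableAt_const _).mul hI
  have hsum : DifferentiableAt ℝ (fun w => dd 1 (phiC φ) w + Complex.I * dd Complex.I (phiC φ) w) z :=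
    h1.add hIc
  -- pdzbar (phiC φ) as a dd-expression
  have hzb : pdzbar (phiC φ) = fun w => (1/2 : ℂ) *
      (dd 1 (phiC φ) w + Complex.I * dd Complex.I (phiC φ) w) := rfl
  -- derivatives of pdzbar
  have hdv : ∀ v : ℂ, dd v (pdzbar (phiC φ)) z =
      (1/2 : ℂ) * (dd v (dd 1 (phiC φ)) z + Complex.I * dd v (dd Complex.I (phiC φ)) z) := by
    intro v
    rw [hzb, dd_const_mul hsum _ v, dd_add h1 hIc v, dd_const_mul hI _ v]
  have hcomm : dd Complex.I (dd 1 (phiC φ)) z = dd 1 (dd Complex.I (phiC φ)) z :=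
    dd_comm hU hΦ Complex.I 1 hz
  have hpz : pdz (pdzbar (phiC φ)) z = (1/4 : ℂ) *
      (dd 1 (dd 1 (phiC φ)) z + dd Complex.I (dd Complex.I (phiC φ)) z) := by
    have : pdz (pdzbar (phiC φ)) z = (1/2 : ℂ) *
        (dd 1 (pdzbar (phiC φ)) z - Complex.I * dd Complex.I (pdzbar (phiC φ)) z) := rfl
    rw [this, hdv 1, hdv Complex.I, hcomm]
    ring_nf
    rw [Complex.I_sq]
    ring
  have hexp : ((Real.exp (-2 * φ z) : ℝ) : ℂ) = Em φ z := by
    have hc : ((-2 : ℂ) * phiC φ z) = ((-2 * φ z : ℝ) : ℂ) := by push_cast [phiC]; ring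
    rw [Em, hc, Complex.ofReal_exp]
  show (-2 : ℂ) * (Real.exp (-2 * φ z) : ℂ) * pdz (pdzbar (phiC φ)) z = Kp φ z
  rw [hpz, hexp, Kp]
  ring

lemma YY_phi (hU : IsOpen U) (hφ : AnalyticOnNhd ℝ φ U) {z : ℂ} (hz : z ∈ U) :
    dd Complex.I (dd Complex.I (phiC φ)) z =
      -2 * E2 φ z * Kp φ z - dd 1 (dd 1 (phiC φ)) z := by
  have h1 : -2 * E2 φ z * Kp φ z =
      (E2 φ z * Em φ z) * (dd 1 (dd 1 (phiC φ)) z + dd Complex.I (dd Complex.I (phiC φ)) z) := by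
    rw [Kp]; ring
  rw [h1, E2_mul_Em]; ring

lemma YY_Kp (hU : IsOpen U) (hφ : AnalyticOnNhd ℝ φ U)
    (hpde : ∀ z ∈ U, sphRe φ z = 0) {z : ℂ} (hz : z ∈ U) :
    dd Complex.I (dd Complex.I (Kp φ)) z =
      dd 1 (dd 1 (Kp φ)) z - 2 * dd 1 (phiC φ) z * dd 1 (Kp φ) z
        + 2 * dd Complex.I (phiC φ) z * dd Complex.I (Kp φ) z := by
  have heq := gaussK_eqOn hU hφ
  have e1 : ∀ v : ℂ, dd v (gaussK φ) z = dd v (Kp φ) z := fun v => dd_congr hU heq v hz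
  have e2 : ∀ v w : ℂ, dd v (dd w (gaussK φ)) z = dd v (dd w (Kp φ)) z := fun v w =>
    dd_congr hU (dd_congr hU heq w) v hz
  have hp := hpde z hz
  have hs : sphRe φ z = dd 1 (dd 1 (gaussK φ)) z - dd Complex.I (dd Complex.I (gaussK φ)) z
      - 2 * dd 1 (phiC φ) z * dd 1 (gaussK φ) z
      + 2 * dd Complex.I (phiC φ) z * dd Complex.I (gaussK φ) z := rfl
  rw [hs] at hp
  rw [e2 1 1, e2 Complex.I Complex.I, e1 1, e1 Complex.I] at hp
  linear_combination -hp


/-! ### bridging `pdyR` iterates with `dd` iterates -/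

lemma pdyR_eq_dd : pdyR = dd (F := ℝ) Complex.I := rfl

lemma ddit_phiC (hU : IsOpen U) (hφ : AnalyticOnNhd ℝ φ U) (n : ℕ) :
    Set.EqOn ((dd Complex.I)^[n] (phiC φ)) (phiC (pdyR^[n] φ)) U := by
  induction n with
  | zero => exact fun z _ => rfl
  | succ n ih =>
    intro z hz
    rw [Function.iterate_succ_apply', Function.iterate_succ_apply']
    have hg : AnalyticOnNhd ℝ (pdyR^[n] φ) U := by
      rw [pdyR_eq_dd]; exact ddit_analytic _ n hφ
    calc dd Complex.I ((dd Complex.I)^[n] (phiC φ)) z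
        = dd Complex.I (phiC (pdyR^[n] φ)) z := dd_congr hU ih Complex.I hz
      _ = Complex.ofRealCLM (dd Complex.I (pdyR^[n] φ) z) := by
          have hfn : phiC (pdyR^[n] φ) = fun w => Complex.ofRealCLM ((pdyR^[n] φ) w) := rfl
          rw [hfn, dd_clm Complex.ofRealCLM ((hg z hz).differentiableAt) Complex.I]
      _ = phiC (pdyR (pdyR^[n] φ)) z := rfl

/-! ### the main Cauchy–Kowalevski style induction -/

lemma key_jets (hU : IsOpen U) (hIopen : IsOpen I) (hIU : ∀ x ∈ I, (x : ℂ) ∈ U)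
    {φ₁ φ₂ : ℂ → ℝ} (hφ₁ : AnalyticOnNhd ℝ φ₁ U) (hφ₂ : AnalyticOnNhd ℝ φ₂ U)
    (hpde₁ : ∀ z ∈ U, sphRe φ₁ z = 0) (hpde₂ : ∀ z ∈ U, sphRe φ₂ z = 0)
    (hdata : ∀ j : Fin 4, ∀ x ∈ I,
      (pdyR^[(j : ℕ)] φ₁) (x : ℂ) = (pdyR^[(j : ℕ)] φ₂) (x : ℂ)) :
    ∀ n, ∀ x ∈ I,
      (dd Complex.I)^[n] (phiC φ₁) ↑x = (dd Complex.I)^[n] (phiC φ₂) ↑x := by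
  intro n
  induction n using Nat.strong_induction_on with
  | _ n ih =>
  intro x hx
  by_cases hn4 : n < 4
  · rw [ddit_phiC hU hφ₁ n (hIU x hx), ddit_phiC hU hφ₂ n (hIU x hx)]
    exact congrArg Complex.ofReal (hdata ⟨n, hn4⟩ x hx)
  · push_neg at hn4
    obtain ⟨c, rfl⟩ : ∃ c, n = c + 4 := ⟨n - 4, by omega⟩
    have hΦ₁ := phiC_analytic hφ₁
    have hΦ₂ := phiC_analytic hφ₂
    have hJ : Jt I (c + 3) (phiC φ₁) (phiC φ₂) :=
      fun c' hc' x' hx' => ih c' (by omega) x' hx'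
    -- analyticity bookkeeping
    have hX1₁ : AnalyticOnNhd ℝ (dd 1 (phiC φ₁)) U := dd_analytic _ hΦ₁
    have hX1₂ : AnalyticOnNhd ℝ (dd 1 (phiC φ₂)) U := dd_analytic _ hΦ₂
    have hX2₁ : AnalyticOnNhd ℝ (dd 1 (dd 1 (phiC φ₁))) U := dd_analytic _ hX1₁
    have hX2₂ : AnalyticOnNhd ℝ (dd 1 (dd 1 (phiC φ₂))) U := dd_analytic _ hX1₂
    have hY1₁ : AnalyticOnNhd ℝ (dd Complex.I (phiC φ₁)) U := dd_analytic _ hΦ₁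
    have hY1₂ : AnalyticOnNhd ℝ (dd Complex.I (phiC φ₂)) U := dd_analytic _ hΦ₂
    have hK₁ := Kp_analytic hφ₁
    have hK₂ := Kp_analytic hφ₂
    have hXK₁ : AnalyticOnNhd ℝ (dd 1 (Kp φ₁)) U := dd_analytic _ hK₁
    have hXK₂ : AnalyticOnNhd ℝ (dd 1 (Kp φ₂)) U := dd_analytic _ hK₂
    have hXXK₁ : AnalyticOnNhd ℝ (dd 1 (dd 1 (Kp φ₁))) U := dd_analytic _ hXK₁
    have hXXK₂ : AnalyticOnNhd ℝ (dd 1 (dd 1 (Kp φ₂))) U := dd_analytic _ hXK₂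
    have hYK₁ : AnalyticOnNhd ℝ (dd Complex.I (Kp φ₁)) U := dd_analytic _ hK₁
    have hYK₂ : AnalyticOnNhd ℝ (dd Complex.I (Kp φ₂)) U := dd_analytic _ hK₂
    -- jets of ingredients
    have JE2 : Jt I (c + 3) (E2 φ₁) (E2 φ₂) :=
      Jt_exp hU hIopen hIU (phiC_mul_analytic hφ₁ 2) (phiC_mul_analytic hφ₂ 2)
        (Jt_const_mul hU hIU hΦ₁ hΦ₂ 2 hJ)
    have JEm : Jt I (c + 3) (Em φ₁) (Em φ₂) :=
      Jt_exp hU hIopen hIU (phiC_mul_analytic hφ₁ (-2)) (phiC_mul_analytic hφ₂ (-2))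
        (Jt_const_mul hU hIU hΦ₁ hΦ₂ (-2) hJ)
    have JX1 : Jt I (c + 3) (dd 1 (phiC φ₁)) (dd 1 (phiC φ₂)) :=
      Jt_X hU hIopen hIU hΦ₁ hΦ₂ hJ
    have JX2 : Jt I (c + 3) (dd 1 (dd 1 (phiC φ₁))) (dd 1 (dd 1 (phiC φ₂))) :=
      Jt_X hU hIopen hIU hX1₁ hX1₂ JX1
    have JY1 : Jt I (c + 2) (dd Complex.I (phiC φ₁)) (dd Complex.I (phiC φ₂)) := Jt_Y hJ
    have JY2 : Jt I (c + 1) (dd Complex.I (dd Complex.I (phiC φ₁)))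
        (dd Complex.I (dd Complex.I (phiC φ₂))) := Jt_Y JY1
    have JKp1 : Jt I (c + 1) (Kp φ₁) (Kp φ₂) := by
      apply Jt_mul hU hIopen hIU
        (analyticOnNhd_const.mul (Em_analytic hφ₁)) (analyticOnNhd_const.mul (Em_analytic hφ₂))
        (hX2₁.add (dd_analytic _ hY1₁)) (hX2₂.add (dd_analytic _ hY1₂))
      · exact Jt_const_mul hU hIU (Em_analytic hφ₁) (Em_analytic hφ₂) _
          (Jt_mono (by omega) JEm)
      · exact Jt_add hU hIopen hIU hX2₁ hX2₂ (dd_analytic _ hY1₁) (dd_analytic _ hY1₂)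
          (Jt_mono (by omega) JX2) JY2
    have JXK : Jt I (c + 1) (dd 1 (Kp φ₁)) (dd 1 (Kp φ₂)) :=
      Jt_X hU hIopen hIU hK₁ hK₂ JKp1
    have JXXK : Jt I (c + 1) (dd 1 (dd 1 (Kp φ₁))) (dd 1 (dd 1 (Kp φ₂))) :=
      Jt_X hU hIopen hIU hXK₁ hXK₂ JXK
    have JYK : Jt I c (dd Complex.I (Kp φ₁)) (dd Complex.I (Kp φ₂)) := Jt_Y JKp1
    -- the right-hand side of the solved-for equation, level c
    have JH : Jt I c
        (fun z => dd 1 (dd 1 (Kp φ₁)) z - 2 * dd 1 (phiC φ₁) z * dd 1 (Kp φ₁) z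
          + 2 * dd Complex.I (phiC φ₁) z * dd Complex.I (Kp φ₁) z)
        (fun z => dd 1 (dd 1 (Kp φ₂)) z - 2 * dd 1 (phiC φ₂) z * dd 1 (Kp φ₂) z
          + 2 * dd Complex.I (phiC φ₂) z * dd Complex.I (Kp φ₂) z) := by
      apply Jt_add hU hIopen hIU
      · exact hXXK₁.sub ((analyticOnNhd_const.mul hX1₁).mul hXK₁)
      · exact hXXK₂.sub ((analyticOnNhd_const.mul hX1₂).mul hXK₂)
      · exact (analyticOnNhd_const.mul hY1₁).mul hYK₁
      · exact (analyticOnNhd_const.mul hY1₂).mul hYK₂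
      · apply Jt_sub hU hIopen hIU hXXK₁ hXXK₂
          ((analyticOnNhd_const.mul hX1₁).mul hXK₁) ((analyticOnNhd_const.mul hX1₂).mul hXK₂)
          (Jt_mono (by omega) JXXK)
        apply Jt_mul hU hIopen hIU (analyticOnNhd_const.mul hX1₁) (analyticOnNhd_const.mul hX1₂)
          hXK₁ hXK₂
        · exact Jt_const_mul hU hIU hX1₁ hX1₂ 2 (Jt_mono (by omega) JX1)
        · exact Jt_mono (by omega) JXK
      · apply Jt_mul hU hIopen hIU (analyticOnNhd_const.mul hY1₁) (analyticOnNhd_const.mul hY1₂)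
          hYK₁ hYK₂
        · exact Jt_const_mul hU hIU hY1₁ hY1₂ 2 (Jt_mono (by omega) JY1)
        · exact JYK
    -- unfolding helper for two extra iterations
    have hit : ∀ (k : ℕ) (g : ℂ → ℂ),
        (dd Complex.I)^[k + 2] g = (dd Complex.I)^[k] (dd Complex.I (dd Complex.I g)) := by
      intro k g
      have h2 : (dd Complex.I)^[2] g = dd Complex.I (dd Complex.I g) := by
        rw [Function.iterate_succ_apply, Function.iterate_succ_apply,
          Function.iterate_zero_apply]
      rw [Function.iterate_add_apply (dd Complex.I) k 2 g, h2]
    -- Kp jets at level c+2 using the PDE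
    have JKp : Jt I (c + 2) (Kp φ₁) (Kp φ₂) := by
      intro c' hc' x' hx'
      rcases Nat.lt_or_ge c' (c + 2) with h | h
      · exact JKp1 c' (by omega) x' hx'
      · have hc'' : c' = c + 2 := by omega
        subst hc''
        rw [hit c (Kp φ₁), hit c (Kp φ₂)]
        have hH₁ : Set.EqOn (dd Complex.I (dd Complex.I (Kp φ₁)))
            (fun z => dd 1 (dd 1 (Kp φ₁)) z - 2 * dd 1 (phiC φ₁) z * dd 1 (Kp φ₁) z
              + 2 * dd Complex.I (phiC φ₁) z * dd Complex.I (Kp φ₁) z) U :=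
          fun z hz => YY_Kp hU hφ₁ hpde₁ hz
        have hH₂ : Set.EqOn (dd Complex.I (dd Complex.I (Kp φ₂)))
            (fun z => dd 1 (dd 1 (Kp φ₂)) z - 2 * dd 1 (phiC φ₂) z * dd 1 (Kp φ₂) z
              + 2 * dd Complex.I (phiC φ₂) z * dd Complex.I (Kp φ₂) z) U :=
          fun z hz => YY_Kp hU hφ₂ hpde₂ hz
        rw [ddit_congr hU hH₁ Complex.I c (hIU x' hx'),
          ddit_congr hU hH₂ Complex.I c (hIU x' hx')]
        exact JH c le_rfl x' hx'
    -- final step: two more y-derivatives of φ via the curvature equation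
    have hc4 : c + 4 = (c + 2) + 2 := by omega
    rw [hc4, hit (c + 2) (phiC φ₁), hit (c + 2) (phiC φ₂)]
    have hW₁ : Set.EqOn (dd Complex.I (dd Complex.I (phiC φ₁)))
        (fun z => -2 * E2 φ₁ z * Kp φ₁ z - dd 1 (dd 1 (phiC φ₁)) z) U :=
      fun z hz => YY_phi hU hφ₁ hz
    have hW₂ : Set.EqOn (dd Complex.I (dd Complex.I (phiC φ₂)))
        (fun z => -2 * E2 φ₂ z * Kp φ₂ z - dd 1 (dd 1 (phiC φ₂)) z) U :=
      fun z hz => YY_phi hU hφ₂ hz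
    rw [ddit_congr hU hW₁ Complex.I (c + 2) (hIU x hx),
      ddit_congr hU hW₂ Complex.I (c + 2) (hIU x hx)]
    have JW : Jt I (c + 2)
        (fun z => -2 * E2 φ₁ z * Kp φ₁ z - dd 1 (dd 1 (phiC φ₁)) z)
        (fun z => -2 * E2 φ₂ z * Kp φ₂ z - dd 1 (dd 1 (phiC φ₂)) z) := by
      apply Jt_sub hU hIopen hIU
        ((analyticOnNhd_const.mul (E2_analytic hφ₁)).mul hK₁)
        ((analyticOnNhd_const.mul (E2_analytic hφ₂)).mul hK₂) hX2₁ hX2₂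
      · apply Jt_mul hU hIopen hIU (analyticOnNhd_const.mul (E2_analytic hφ₁))
          (analyticOnNhd_const.mul (E2_analytic hφ₂)) hK₁ hK₂
        · exact Jt_const_mul hU hIU (E2_analytic hφ₁) (E2_analytic hφ₂) (-2)
            (Jt_mono (by omega) JE2)
        · exact JKp
      · exact Jt_mono (by omega) JX2
    exact JW (c + 2) le_rfl x hx


/-! ### flat functions and vanishing of iterated derivatives -/

def Flat (U : Set ℂ) (I : Set ℝ) {F : Type} [NormedAddCommGroup F] [NormedSpace ℝ F]
    (g : ℂ → F) : Prop :=
  ∀ c : ℕ, ∀ x ∈ I, ((dd Complex.I)^[c] g) (x : ℂ) = 0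

lemma flat_X (hU : IsOpen U) (hIopen : IsOpen I) (hIU : ∀ x ∈ I, (x : ℂ) ∈ U)
    {g : ℂ → F} (hg : AnalyticOnNhd ℝ g U) (h : Flat U I g) : Flat U I (dd 1 g) := by
  intro c x hx
  rw [ddit_comm1 hU hg c (hIU x hx)]
  have hdiff : DifferentiableAt ℝ ((dd Complex.I)^[c] g) x :=
    ((ddit_analytic Complex.I c hg) _ (hIU x hx)).differentiableAt
  have h1 := (hasDerivAt_line hdiff).deriv
  have h2 : (fun t : ℝ => ((dd Complex.I)^[c] g) ↑t) =ᶠ[nhds x] fun _ => (0 : F) :=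
    Filter.eventuallyEq_of_mem (hIopen.mem_nhds hx) (fun t ht => h c t ht)
  rw [show dd 1 ((dd Complex.I)^[c] g) ↑x = deriv (fun t : ℝ => ((dd Complex.I)^[c] g) ↑t) x
    from h1.symm, h2.deriv_eq, deriv_const]

lemma flat_Y {g : ℂ → F} (h : Flat U I g) : Flat U I (dd Complex.I g) := by
  intro c x hx
  rw [← Function.iterate_succ_apply]
  exact h (c + 1) x hx

lemma clm_ext1I {A : ℂ →L[ℝ] F} (h1 : A 1 = 0) (hI : A Complex.I = 0) : A = 0 := by
  ext z
  have hz : z = z.re • (1 : ℂ) + z.im • Complex.I := by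
    simp [Complex.real_smul, Complex.re_add_im]
  rw [show A z = A (z.re • (1 : ℂ) + z.im • Complex.I) from by rw [← hz]]
  rw [map_add, map_smul, map_smul, h1, hI, smul_zero, smul_zero, add_zero]
  rfl

lemma flat_fderiv (hU : IsOpen U) (hIopen : IsOpen I) (hIU : ∀ x ∈ I, (x : ℂ) ∈ U)
    {g : ℂ → F} (hg : AnalyticOnNhd ℝ g U) (h : Flat U I g) : Flat U I (fderiv ℝ g) := by
  intro c x hx
  have hval : ∀ v : ℂ, ((dd Complex.I)^[c] (fderiv ℝ g)) (x : ℂ) v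
      = ((dd Complex.I)^[c] (dd v g)) (x : ℂ) := by
    intro v
    have := ddit_clm hU (ContinuousLinearMap.apply ℝ F v) hg.fderiv Complex.I c (hIU x hx)
    exact this.symm
  apply clm_ext1I
  · rw [hval 1]; exact flat_X hU hIopen hIU hg h c x hx
  · rw [hval Complex.I]; exact flat_Y h c x hx

lemma flat_iteratedFDeriv (hU : IsOpen U) (hIopen : IsOpen I)
    (hIU : ∀ x ∈ I, (x : ℂ) ∈ U) (hI0 : (0 : ℝ) ∈ I) :
    ∀ (n : ℕ) (F : Type) [NormedAddCommGroup F] [NormedSpace ℝ F] [CompleteSpace F]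
      (g : ℂ → F), AnalyticOnNhd ℝ g U → Flat U I g → iteratedFDeriv ℝ n g 0 = 0 := by
  intro n
  induction n with
  | zero =>
    intro F _ _ _ g hg hflat
    ext m
    have h0 := hflat 0 0 hI0
    simp only [Function.iterate_zero_apply, Complex.ofReal_zero] at h0
    simp [h0]
  | succ n ihn =>
    intro F _ _ _ g hg hflat
    ext m
    rw [iteratedFDeriv_succ_eq_comp_right]
    simp only [Function.comp_apply]
    rw [ihn (ℂ →L[ℝ] F) (fderiv ℝ g) hg.fderiv (flat_fderiv hU hIopen hIU hg hflat)]
    simp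

end SCU

/-- Lemma 4.6 of the paper, injectivity: two real analytic solutions of the
fourth-order equation `∂_x²K - ∂_y²K - 2(∂_xφ)(∂_xK) + 2(∂_yφ)(∂_yK) = 0` with the same
4-jet Cauchy data on the line `{y = 0}` agree near the origin. -/
theorem spherical_cauchy_uniqueness (U : Set ℂ) (hUopen : IsOpen U)
    (hUconn : IsConnected U) (hU0 : (0 : ℂ) ∈ U)
    (φ₁ φ₂ : ℂ → ℝ) (h₁ : AnalyticOnNhd ℝ φ₁ U) (h₂ : AnalyticOnNhd ℝ φ₂ U)
    (hpde₁ : ∀ z ∈ U, sphRe φ₁ z = 0) (hpde₂ : ∀ z ∈ U, sphRe φ₂ z = 0)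
    (I : Set ℝ) (hIopen : IsOpen I) (hI0 : (0 : ℝ) ∈ I) (hIint : I.OrdConnected)
    (hIU : ∀ x ∈ I, (x : ℂ) ∈ U)
    (hdata : ∀ j : Fin 4, ∀ x ∈ I,
      (pdyR^[(j : ℕ)] φ₁) (x : ℂ) = (pdyR^[(j : ℕ)] φ₂) (x : ℂ)) :
    ∃ V : Set ℂ, IsOpen V ∧ (0 : ℂ) ∈ V ∧ ∀ z ∈ V, φ₁ z = φ₂ z := by
  have hkey := SCU.key_jets hUopen hIopen hIU h₁ h₂ hpde₁ hpde₂ hdata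
  have hΦ₁ := SCU.phiC_analytic (U := U) h₁
  have hΦ₂ := SCU.phiC_analytic (U := U) h₂
  set Ψ : ℂ → ℂ := fun z => phiC φ₁ z - phiC φ₂ z with hΨdef
  have hΨa : AnalyticOnNhd ℝ Ψ U := fun z hz => ((hΦ₁ z hz).sub (hΦ₂ z hz))
  have hflat : SCU.Flat U I Ψ := by
    intro c x hx
    rw [SCU.ddit_sub hUopen hΦ₁ hΦ₂ Complex.I c (hIU x hx)]
    have := hkey c x hx
    simp only [this, sub_self]
  have hifd : ∀ n, iteratedFDeriv ℝ n Ψ 0 = 0 := fun n =>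
    SCU.flat_iteratedFDeriv hUopen hIopen hIU hI0 n ℂ Ψ hΨa hflat
  obtain ⟨p, hp⟩ := hΨa 0 hU0
  obtain ⟨r, hr⟩ := hp
  refine ⟨EMetric.ball (0 : ℂ) r, EMetric.isOpen_ball, EMetric.mem_ball_self hr.r_pos, ?_⟩
  intro z hz
  have hsum := hr.hasSum_iteratedFDeriv (y := z) hz
  simp only [hifd, ContinuousMultilinearMap.zero_apply, smul_zero] at hsum
  have hzero : Ψ (0 + z) = 0 := hsum.unique hasSum_zero
  rw [zero_add] at hzero
  have : (φ₁ z : ℂ) = (φ₂ z : ℂ) := by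
    have := sub_eq_zero.mp hzero
    exact this
  exact_mod_cast this
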